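/- The κ-layer ReLU encoder-decoder network F with skipped connections is globally Lipschitz continuous with Lipschitz constant K = sup_{x ∈ ℝ^{d₀}} ‖B̃^{skp}(x) B^{skp}(x)ᵀ‖₂ (a maximum over the finitely many realized matrices, hence finite): for all x₁, x₂ ∈ ℝ^{d₀}, ‖F(x₁) − F(x₂)‖₂ ≤ K ‖x₁ − x₂‖₂. -/

import Mathlib

open Matrix

/-- Elementwise ReLU. -/
def relu {ι : Type*} (z : ι → ℝ) : ι → ℝ := fun i => max (z i) 0

/-- The diagonal 0–1 activation matrix `Λ(z)`, with `Λ(z)_{ii} = 1` iff `z_i > 0`,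
so that `σ(z) = Λ(z) z`. -/
noncomputable def actMat {ι : Type*} [Fintype ι] [DecidableEq ι] (z : ι → ℝ) : Matrix ι ι ℝ :=
  Matrix.diagonal fun i => if 0 < z i then 1 else 0

/-- Encoder features: `ξ⁰ = x`, `ξ^{l+1} = σ(E^{l+1ᵀ} ξ^l)`. -/
def enc (d : ℕ → ℕ) (E : (l : ℕ) → Matrix (Fin (d l)) (Fin (d (l + 1))) ℝ)
    (x : Fin (d 0) → ℝ) : (l : ℕ) → Fin (d l) → ℝ
  | 0 => x
  | l + 1 => relu ((E l)ᵀ.mulVec (enc d E x l))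

/-- Skipped features `χ^{l+1} = σ(S^{l+1ᵀ} ξ^l)`. -/
def chiF (d s : ℕ → ℕ) (E : (l : ℕ) → Matrix (Fin (d l)) (Fin (d (l + 1))) ℝ)
    (S : (l : ℕ) → Matrix (Fin (d l)) (Fin (s (l + 1))) ℝ)
    (x : Fin (d 0) → ℝ) (l : ℕ) : Fin (s (l + 1)) → ℝ :=
  relu ((S l)ᵀ.mulVec (enc d E x l))

/-- Decoder features `ξ̃^j` of the κ-layer skip network: `ξ̃^κ = ξ^κ` and
`ξ̃^j = σ(D^{j+1} ξ̃^{j+1} + S̃^{j+1} χ^{j+1})` for `j < κ`; `F(x) = ξ̃⁰`. -/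
def decS (κ : ℕ) (d s : ℕ → ℕ)
    (E D : (l : ℕ) → Matrix (Fin (d l)) (Fin (d (l + 1))) ℝ)
    (S St : (l : ℕ) → Matrix (Fin (d l)) (Fin (s (l + 1))) ℝ)
    (x : Fin (d 0) → ℝ) : (j : ℕ) → Fin (d j) → ℝ
  | j =>
    if h : j < κ then
      relu ((D j).mulVec (decS κ d s E D S St x (j + 1)) + (St j).mulVec (chiF d s E S x j))
    else enc d E x j
  termination_by j => κ - j
  decreasing_by simp_wf; omega

/-- `Υ^l(x) = Υ^{l−1}(x) E^l Λ^l(x)`, `Υ⁰ = I`. -/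
noncomputable def UpsE (d : ℕ → ℕ) (E : (l : ℕ) → Matrix (Fin (d l)) (Fin (d (l + 1))) ℝ)
    (x : Fin (d 0) → ℝ) : (l : ℕ) → Matrix (Fin (d 0)) (Fin (d l)) ℝ
  | 0 => 1
  | l + 1 => UpsE d E x l * E l * actMat ((E l)ᵀ.mulVec (enc d E x l))

/-- `Υ̃^l(x) = Υ̃^{l−1}(x) Λ̃^l(x) D^l`, `Υ̃⁰ = I`, where
`Λ̃^l(x) = Λ(D^l ξ̃^l + S̃^l χ^l)`. -/
noncomputable def UpsDS (κ : ℕ) (d s : ℕ → ℕ)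
    (E D : (l : ℕ) → Matrix (Fin (d l)) (Fin (d (l + 1))) ℝ)
    (S St : (l : ℕ) → Matrix (Fin (d l)) (Fin (s (l + 1))) ℝ)
    (x : Fin (d 0) → ℝ) : (l : ℕ) → Matrix (Fin (d 0)) (Fin (d l)) ℝ
  | 0 => 1
  | l + 1 => UpsDS κ d s E D S St x l *
      actMat ((D l).mulVec (decS κ d s E D S St x (l + 1)) + (St l).mulVec (chiF d s E S x l)) *
      D l

/-- `M^l(x) = S^l Λ_S^l(x)` with `Λ_S^l(x) = Λ(S^{lᵀ} ξ^{l−1})`. -/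
noncomputable def Mskip (d s : ℕ → ℕ)
    (E : (l : ℕ) → Matrix (Fin (d l)) (Fin (d (l + 1))) ℝ)
    (S : (l : ℕ) → Matrix (Fin (d l)) (Fin (s (l + 1))) ℝ)
    (x : Fin (d 0) → ℝ) (l : ℕ) : Matrix (Fin (d l)) (Fin (s (l + 1))) ℝ :=
  S l * actMat ((S l)ᵀ.mulVec (enc d E x l))

/-- `M̃^l(x) = Λ̃^l(x) S̃^l`. -/
noncomputable def MskipT (κ : ℕ) (d s : ℕ → ℕ)
    (E D : (l : ℕ) → Matrix (Fin (d l)) (Fin (d (l + 1))) ℝ)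
    (S St : (l : ℕ) → Matrix (Fin (d l)) (Fin (s (l + 1))) ℝ)
    (x : Fin (d 0) → ℝ) (l : ℕ) : Matrix (Fin (d l)) (Fin (s (l + 1))) ℝ :=
  actMat ((D l).mulVec (decS κ d s E D S St x (l + 1)) + (St l).mulVec (chiF d s E S x l)) * St l

/-- Column index of the skip frame matrices `B^{skp}(x)`, `B̃^{skp}(x)`. -/
abbrev SkipIdx (κ : ℕ) (d s : ℕ → ℕ) := (Fin (d κ)) ⊕ (Σ l : Fin κ, Fin (s (l + 1)))

/-- `B^{skp}(x) = [Υ^κ, Υ^{κ−1}M^κ, …, M¹]`. -/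
noncomputable def Bskip (κ : ℕ) (d s : ℕ → ℕ)
    (E : (l : ℕ) → Matrix (Fin (d l)) (Fin (d (l + 1))) ℝ)
    (S : (l : ℕ) → Matrix (Fin (d l)) (Fin (s (l + 1))) ℝ)
    (x : Fin (d 0) → ℝ) : Matrix (Fin (d 0)) (SkipIdx κ d s) ℝ :=
  fun i c => match c with
  | Sum.inl j => UpsE d E x κ i j
  | Sum.inr ⟨l, j⟩ => (UpsE d E x l * Mskip d s E S x l) i j

/-- `B̃^{skp}(x) = [Υ̃^κ, Υ̃^{κ−1}M̃^κ, …, M̃¹]`. -/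
noncomputable def BskipT (κ : ℕ) (d s : ℕ → ℕ)
    (E D : (l : ℕ) → Matrix (Fin (d l)) (Fin (d (l + 1))) ℝ)
    (S St : (l : ℕ) → Matrix (Fin (d l)) (Fin (s (l + 1))) ℝ)
    (x : Fin (d 0) → ℝ) : Matrix (Fin (d 0)) (SkipIdx κ d s) ℝ :=
  fun i c => match c with
  | Sum.inl j => UpsDS κ d s E D S St x κ i j
  | Sum.inr ⟨l, j⟩ => (UpsDS κ d s E D S St x l * MskipT κ d s E D S St x l) i j

/-- The Euclidean (ℓ²) norm of a vector. -/
noncomputable def euclNorm {ι : Type*} [Fintype ι] (v : ι → ℝ) : ℝ :=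
  Real.sqrt (∑ i, v i ^ 2)

/-- The spectral norm `‖M‖₂` of a matrix: the operator norm with respect to the
Euclidean norms, i.e. the supremum of `‖Mv‖₂` over unit vectors `v`. -/
noncomputable def specNorm {ι ι' : Type*} [Fintype ι] [Fintype ι'] (M : Matrix ι ι' ℝ) : ℝ :=
  ⨆ v : {v : ι' → ℝ // euclNorm v = 1}, euclNorm (M.mulVec v.1)
namespace Stmt16Aux

open Filter Set Topology Matrix

/-! ### Euclidean norm lemmas -/

section Enorm
variable {ι ι' : Type*} [Fintype ι] [Fintype ι']

lemma enorm_eq_norm (v : ι → ℝ) :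
    euclNorm v = ‖(show EuclideanSpace ℝ ι from (WithLp.equiv 2 (ι → ℝ)).symm v)‖ := by
  rw [EuclideanSpace.norm_eq, euclNorm]
  congr 1
  refine Finset.sum_congr rfl fun i _ => ?_
  rw [Real.norm_eq_abs, sq_abs]
  rfl

lemma enorm_nonneg (v : ι → ℝ) : 0 ≤ euclNorm v := Real.sqrt_nonneg _

lemma enorm_zero : euclNorm (0 : ι → ℝ) = 0 := by simp [euclNorm]

lemma enorm_pos_of_ne {v : ι → ℝ} (hv : v ≠ 0) : 0 < euclNorm v := by
  obtain ⟨i, hi⟩ := Function.ne_iff.1 hv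
  have h1 : (v i) ^ 2 ≤ ∑ j, v j ^ 2 :=
    Finset.single_le_sum (fun j _ => sq_nonneg (v j)) (Finset.mem_univ i)
  calc (0 : ℝ) < |v i| := abs_pos.2 hi
  _ = Real.sqrt ((v i) ^ 2) := (Real.sqrt_sq_eq_abs _).symm
  _ ≤ euclNorm v := Real.sqrt_le_sqrt h1

lemma enorm_smul (c : ℝ) (v : ι → ℝ) : euclNorm (c • v) = |c| * euclNorm v := by
  unfold euclNorm
  have : ∑ i, (c • v) i ^ 2 = c ^ 2 * ∑ i, v i ^ 2 := by
    rw [Finset.mul_sum]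
    exact Finset.sum_congr rfl fun i _ => by simp [mul_pow]
  rw [this, Real.sqrt_mul (sq_nonneg c), Real.sqrt_sq_eq_abs]

lemma enorm_add_le (u w : ι → ℝ) : euclNorm (u + w) ≤ euclNorm u + euclNorm w := by
  rw [enorm_eq_norm u, enorm_eq_norm w, enorm_eq_norm (u + w)]
  exact norm_add_le ((WithLp.equiv 2 (ι → ℝ)).symm u) ((WithLp.equiv 2 (ι → ℝ)).symm w)

lemma enorm_sub_le (u w z : ι → ℝ) : euclNorm (u - z) ≤ euclNorm (u - w) + euclNorm (w - z) := by
  have h : u - z = (u - w) + (w - z) := by abel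
  rw [h]
  exact enorm_add_le _ _

lemma continuous_enorm_comp {α : Type*} [TopologicalSpace α] {f : α → ι → ℝ}
    (hf : Continuous f) : Continuous fun t => euclNorm (f t) := by
  unfold euclNorm
  exact Real.continuous_sqrt.comp
    (continuous_finset_sum _ fun i _ => ((continuous_apply i).comp hf).pow 2)

/-- Frobenius norm. -/
noncomputable def frob (M : Matrix ι ι' ℝ) : ℝ := Real.sqrt (∑ i, ∑ j, M i j ^ 2)

lemma enorm_mulVec_le_frob (M : Matrix ι ι' ℝ) (v : ι' → ℝ) :
    euclNorm (M.mulVec v) ≤ frob M * euclNorm v := by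
  rw [euclNorm, frob, euclNorm, ← Real.sqrt_mul (by positivity)]
  apply Real.sqrt_le_sqrt
  rw [Finset.sum_mul]
  refine Finset.sum_le_sum fun i _ => ?_
  calc (M.mulVec v i) ^ 2 = (∑ j, M i j * v j) ^ 2 := by
        simp [Matrix.mulVec, dotProduct]
  _ ≤ (∑ j, M i j ^ 2) * ∑ j, v j ^ 2 := Finset.sum_mul_sq_le_sq_mul_sq _ _ _

lemma bddAbove_spec (M : Matrix ι ι' ℝ) :
    BddAbove (range fun u : {v : ι' → ℝ // euclNorm v = 1} => euclNorm (M.mulVec u.1)) := by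
  refine ⟨frob M, ?_⟩
  rintro y ⟨u, rfl⟩
  calc euclNorm (M.mulVec u.1) ≤ frob M * euclNorm u.1 := enorm_mulVec_le_frob M u.1
  _ = frob M := by rw [u.2, mul_one]

lemma enorm_mulVec_le_specNorm (M : Matrix ι ι' ℝ) (v : ι' → ℝ) :
    euclNorm (M.mulVec v) ≤ specNorm M * euclNorm v := by
  by_cases hv : v = 0
  · subst hv
    simp [Matrix.mulVec_zero, euclNorm]
  · have hp : 0 < euclNorm v := enorm_pos_of_ne hv
    have hu : euclNorm ((euclNorm v)⁻¹ • v) = 1 := by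
      rw [enorm_smul, abs_of_pos (inv_pos.2 hp), inv_mul_cancel₀ hp.ne']
    have h1 : euclNorm (M.mulVec ((euclNorm v)⁻¹ • v)) ≤ specNorm M :=
      le_ciSup (bddAbove_spec M) (⟨_, hu⟩ : {v : ι' → ℝ // euclNorm v = 1})
    rw [Matrix.mulVec_smul, enorm_smul, abs_of_pos (inv_pos.2 hp)] at h1
    calc euclNorm (M.mulVec v) = euclNorm v * ((euclNorm v)⁻¹ * euclNorm (M.mulVec v)) := by
          field_simp
    _ ≤ euclNorm v * specNorm M := mul_le_mul_of_nonneg_left h1 hp.le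
    _ = specNorm M * euclNorm v := mul_comm _ _

end Enorm

/-! ### Range finiteness helpers -/

section FinRange
variable {α β γ δ : Type*}

lemma finiteRange_const (b : β) : (range fun _ : α => b).Finite :=
  (Set.finite_singleton b).subset (by rintro _ ⟨a, rfl⟩; simp)

lemma finiteRange_comp2 (op : β → γ → δ) {g : α → β} {h : α → γ}
    (hg : (range g).Finite) (hh : (range h).Finite) :
    (range fun a => op (g a) (h a)).Finite := by
  have hsub : (range fun a => op (g a) (h a)) ⊆
      (fun p : β × γ => op p.1 p.2) '' (range g ×ˢ range h) := by
    rintro _ ⟨a, rfl⟩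
    exact ⟨(g a, h a), ⟨⟨a, rfl⟩, ⟨a, rfl⟩⟩, rfl⟩
  exact ((hg.prod hh).image _).subset hsub

lemma finiteRange_comp1 (op : β → δ) {g : α → β} (hg : (range g).Finite) :
    (range fun a => op (g a)).Finite := by
  have hsub : (range fun a => op (g a)) ⊆ op '' range g := by
    rintro _ ⟨a, rfl⟩; exact ⟨g a, ⟨a, rfl⟩, rfl⟩
  exact (hg.image op).subset hsub

lemma finiteRange_pi {ιx : Type*} [Finite ιx] {β : ιx → Type*} (T : (i : ιx) → α → β i)
    (h : ∀ i, (range (T i)).Finite) : (range fun a => fun i => T i a).Finite := by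
  have hsub : (range fun a => fun i => T i a) ⊆ univ.pi fun i => range (T i) := by
    rintro _ ⟨a, rfl⟩ i _; exact ⟨a, rfl⟩
  exact (Set.Finite.pi h).subset hsub

lemma finiteRange_sum {ιx M : Type*} [AddCommMonoid M] (t : Finset ιx) (T : ιx → α → M)
    (h : ∀ l, (range (T l)).Finite) : (range fun a => ∑ l ∈ t, T l a).Finite := by
  classical
  induction t using Finset.induction_on with
  | empty => simpa using finiteRange_const (0 : M)
  | insert _ _ hnm ih =>
      simp only [Finset.sum_insert hnm]
      exact finiteRange_comp2 (· + ·) (h _) ih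

lemma finiteRange_actMat {ι : Type*} [Fintype ι] [DecidableEq ι] (f : α → ι → ℝ) :
    (range fun a => actMat (f a)).Finite := by
  have hsub : (range fun a => actMat (f a)) ⊆
      (fun b : ι → Bool => Matrix.diagonal fun i => if b i then (1 : ℝ) else 0) '' univ := by
    rintro _ ⟨a, rfl⟩
    refine ⟨fun i => decide (0 < f a i), mem_univ _, ?_⟩
    unfold actMat
    congr 1
    funext i
    by_cases h : 0 < f a i <;> simp [h]
  exact (Set.finite_univ.image _).subset hsub

end FinRange

end Stmt16Aux
namespace Stmt16Aux

open Filter Set Topology Matrix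

/-! ### A continuous-induction ("reach") lemma on the real line -/

lemma reach {S : Set ℝ} {a b : ℝ} (hab : a ≤ b) (ha : a ∈ S)
    (hclosed : ∀ m ∈ Icc a b, m ∈ closure (S ∩ Icc a b) → m ∈ S)
    (hext : ∀ m ∈ Ico a b, m ∈ S → ∀ᶠ x in 𝓝[>] m, x ∈ S) : b ∈ S := by
  set T := S ∩ Icc a b with hT
  have hTne : T.Nonempty := ⟨a, ha, le_refl a, hab⟩
  have hbdd : BddAbove T := ⟨b, fun t ht => ht.2.2⟩
  set m := sSup T with hm
  have hm_mem : m ∈ Icc a b := ⟨le_csSup hbdd ⟨ha, le_refl a, hab⟩, csSup_le hTne fun t ht => ht.2.2⟩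
  have hmS : m ∈ S := hclosed m hm_mem (csSup_mem_closure hTne hbdd)
  rcases eq_or_lt_of_le hm_mem.2 with h | h
  · rwa [h] at hmS
  · exfalso
    have h1 : ∀ᶠ x in 𝓝[>] m, x ∈ S := hext m ⟨hm_mem.1, h⟩ hmS
    have h2 : ∀ᶠ x in 𝓝[>] m, x ∈ Ioo m b :=
      eventually_of_mem (Ioo_mem_nhdsGT_of_mem ⟨le_refl m, h⟩) fun x hx => hx
    obtain ⟨x, hxS, hx⟩ := (h1.and h2).exists
    exact absurd (le_csSup hbdd ⟨hxS, le_trans hm_mem.1 hx.1.le, hx.2.le⟩) (not_le.2 hx.1)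

lemma const_of_locallyConst {α : Type*} {a b : ℝ} (hab : a ≤ b) (g : ℝ → α)
    (h : ∀ t ∈ Icc a b, ∀ᶠ s in 𝓝 t, g s = g t) : g b = g a := by
  have : b ∈ {t : ℝ | g t = g a} := by
    refine reach (S := {t : ℝ | g t = g a}) hab rfl ?_ ?_
    · intro m hm hmcl
      have hev : {s : ℝ | g s = g m} ∈ 𝓝 m := h m hm
      obtain ⟨x, hx1, hx2, -⟩ := mem_closure_iff_nhds.1 hmcl _ hev
      exact hx1.symm.trans hx2
    · intro m hm hmS
      have hev : ∀ᶠ s in 𝓝[>] m, g s = g m :=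
        eventually_nhdsWithin_of_eventually_nhds (h m ⟨hm.1, hm.2.le⟩)
      filter_upwards [hev] with x hx
      exact hx.trans hmS
  exact this

lemma finite_of_separated {Z B : Set ℝ} (hB : B.Finite)
    (h : ∀ z₁ ∈ Z, ∀ z₂ ∈ Z, z₁ < z₂ → ∃ c ∈ B, z₁ < c ∧ c < z₂) : Z.Finite := by
  classical
  rw [← Set.finite_coe_iff]
  set B' := hB.toFinset with hB'
  refine Finite.of_injective
    (fun z : Z => (⟨B'.filter (fun c => (z : ℝ) < c),
      Finset.mem_powerset.2 (Finset.filter_subset _ _)⟩ : B'.powerset)) ?_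
  have key : ∀ z₁ z₂ : Z, (z₁ : ℝ) < z₂ →
      B'.filter (fun c => (z₁ : ℝ) < c) ≠ B'.filter (fun c => (z₂ : ℝ) < c) := by
    intro z₁ z₂ hlt heq
    obtain ⟨c, hcB, h1, h2⟩ := h z₁ z₁.2 z₂ z₂.2 hlt
    have hc1 : c ∈ B'.filter (fun c => (z₁ : ℝ) < c) :=
      Finset.mem_filter.2 ⟨hB.mem_toFinset.2 hcB, h1⟩
    rw [heq] at hc1
    exact absurd (Finset.mem_filter.1 hc1).2 (not_lt.2 h2.le)
  intro z₁ z₂ heq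
  have heq' : B'.filter (fun c => (z₁ : ℝ) < c) = B'.filter (fun c => (z₂ : ℝ) < c) := by
    exact congrArg Subtype.val heq
  rcases lt_trichotomy (z₁ : ℝ) (z₂ : ℝ) with hlt | heqv | hgt
  · exact absurd heq' (key z₁ z₂ hlt)
  · exact Subtype.ext heqv
  · exact absurd heq'.symm (key z₂ z₁ hgt)

/-! ### Piecewise-linear functions on ℝ -/

/-- `f` is locally affine at `t`. -/
def LocAff (f : ℝ → ℝ) (t : ℝ) : Prop := ∃ a b : ℝ, ∀ᶠ s in 𝓝 t, f s = a * s + b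

/-- Points where `f` is not locally affine. -/
def PLBad (f : ℝ → ℝ) : Set ℝ := {t | ¬ LocAff f t}

/-- Piecewise-linear: continuous with finitely many non-locally-affine points. -/
structure PL (f : ℝ → ℝ) : Prop where
  cont : Continuous f
  bad : (PLBad f).Finite

lemma LocAff.add {f g : ℝ → ℝ} {t : ℝ} (hf : LocAff f t) (hg : LocAff g t) :
    LocAff (fun s => f s + g s) t := by
  obtain ⟨a, b, h1⟩ := hf
  obtain ⟨a', b', h2⟩ := hg
  refine ⟨a + a', b + b', ?_⟩
  filter_upwards [h1, h2] with s hs1 hs2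
  rw [hs1, hs2]; ring

lemma LocAff.const_mul {f : ℝ → ℝ} {t : ℝ} (c : ℝ) (hf : LocAff f t) :
    LocAff (fun s => c * f s) t := by
  obtain ⟨a, b, h1⟩ := hf
  refine ⟨c * a, c * b, ?_⟩
  filter_upwards [h1] with s hs
  rw [hs]; ring

lemma locAff_affine (a b t : ℝ) : LocAff (fun s => a * s + b) t :=
  ⟨a, b, Eventually.of_forall fun _ => rfl⟩

lemma locAff_const (c t : ℝ) : LocAff (fun _ => c) t :=
  ⟨0, c, Eventually.of_forall fun s => by ring⟩

lemma not_mem_PLBad {f : ℝ → ℝ} {t : ℝ} (h : t ∉ PLBad f) : LocAff f t := not_not.1 h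

lemma PL.add {f g : ℝ → ℝ} (hf : PL f) (hg : PL g) : PL (fun s => f s + g s) := by
  refine ⟨hf.cont.add hg.cont, (hf.bad.union hg.bad).subset ?_⟩
  intro t ht
  by_contra hcon
  simp only [mem_union, not_or] at hcon
  exact ht ((not_mem_PLBad hcon.1).add (not_mem_PLBad hcon.2))

lemma PL.const_mul {f : ℝ → ℝ} (c : ℝ) (hf : PL f) : PL (fun s => c * f s) := by
  refine ⟨continuous_const.mul hf.cont, hf.bad.subset ?_⟩
  intro t ht
  by_contra hcon
  exact ht ((not_mem_PLBad hcon).const_mul c)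

lemma PL.affine (a b : ℝ) : PL (fun s => a * s + b) :=
  ⟨by continuity, Set.finite_empty.subset fun t ht => ht (locAff_affine a b t)⟩

lemma PL.const (c : ℝ) : PL (fun _ => c) :=
  ⟨continuous_const, Set.finite_empty.subset fun t ht => ht (locAff_const c t)⟩

lemma PL.sum {ιx : Type*} (t : Finset ιx) (T : ιx → ℝ → ℝ) (h : ∀ i, PL (T i)) :
    PL (fun x => ∑ i ∈ t, T i x) := by
  classical
  induction t using Finset.induction_on with
  | empty => simpa using PL.const 0
  | insert _ _ hnm ih =>
      simp only [Finset.sum_insert hnm]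
      exact (h _).add ih

lemma locAff_eventually_deriv {f : ℝ → ℝ} {t a b : ℝ} (h : ∀ᶠ s in 𝓝 t, f s = a * s + b) :
    ∀ᶠ s in 𝓝 t, deriv f s = a ∧ f s = a * s + b := by
  obtain ⟨U, hUsub, hUopen, htU⟩ := eventually_nhds_iff.1 h
  refine eventually_nhds_iff.2 ⟨U, fun s hs => ⟨?_, hUsub s hs⟩, hUopen, htU⟩
  have hev : f =ᶠ[𝓝 s] fun s => a * s + b :=
    eventually_nhds_iff.2 ⟨U, hUsub, hUopen, hs⟩
  rw [hev.deriv_eq]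
  have hda : HasDerivAt (fun s : ℝ => a * s + b) a s := by
    simpa using ((hasDerivAt_id s).const_mul a).add_const b
  exact hda.deriv

lemma locAff_deriv_self {f : ℝ → ℝ} {t a b : ℝ} (h : ∀ᶠ s in 𝓝 t, f s = a * s + b) :
    deriv f t = a ∧ f t = a * t + b :=
  (locAff_eventually_deriv h).self_of_nhds

/-- The set of "genuine zero crossings" of a PL function is finite. -/
lemma finite_crossings {f : ℝ → ℝ} (hf : PL f) :
    {t | f t = 0 ∧ deriv f t ≠ 0 ∧ LocAff f t}.Finite := by
  apply finite_of_separated hf.bad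
  rintro z₁ ⟨hz1, hd1, hl1⟩ z₂ ⟨hz2, hd2, hl2⟩ hlt
  by_contra hcon
  push_neg at hcon
  have hIcc : ∀ t ∈ Icc z₁ z₂, LocAff f t := by
    intro t ht
    rcases eq_or_lt_of_le ht.1 with h1 | h1
    · exact h1 ▸ hl1
    rcases eq_or_lt_of_le ht.2 with h2 | h2
    · exact h2.symm ▸ hl2
    by_contra hbad
    exact absurd (hcon t hbad h1) (not_le.2 h2)
  set G : ℝ → ℝ × ℝ := fun t => (deriv f t, f t - deriv f t * t) with hG
  have hGconst : ∀ t ∈ Icc z₁ z₂, ∀ᶠ s in 𝓝 t, G s = G t := by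
    intro t ht
    obtain ⟨a, b, hab⟩ := hIcc t ht
    obtain ⟨hda, hfa⟩ := locAff_deriv_self hab
    filter_upwards [locAff_eventually_deriv hab] with s hs
    simp only [hG, hs.1, hs.2, hda, hfa, Prod.mk.injEq]
    exact ⟨by trivial, by ring⟩
  have hGG := const_of_locallyConst hlt.le G hGconst
  have ha : deriv f z₂ = deriv f z₁ := congrArg Prod.fst hGG
  have hb : f z₂ - deriv f z₂ * z₂ = f z₁ - deriv f z₁ * z₁ := congrArg Prod.snd hGG
  rw [hz1, hz2, ha] at hb
  apply hd1
  have h3 : deriv f z₁ * (z₂ - z₁) = 0 := by linarith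
  rcases mul_eq_zero.1 h3 with h4 | h4
  · exact h4
  · exact absurd (sub_eq_zero.1 h4) hlt.ne'

end Stmt16Aux
namespace Stmt16Aux

open Filter Set Topology Matrix

/-- ReLU of a PL function is PL. -/
lemma PL.relu {f : ℝ → ℝ} (hf : PL f) : PL (fun s => max (f s) 0) := by
  refine ⟨hf.cont.max continuous_const, ?_⟩
  apply (hf.bad.union (finite_crossings hf)).subset
  intro t ht
  by_contra hcon
  simp only [mem_union, not_or] at hcon
  obtain ⟨hc1, hc2⟩ := hcon
  have hla := not_mem_PLBad hc1
  apply ht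
  obtain ⟨a, b, hab⟩ := hla
  rcases lt_trichotomy (f t) 0 with h | h | h
  · have hev : ∀ᶠ s in 𝓝 t, f s < 0 := hf.cont.continuousAt (Iio_mem_nhds h)
    refine ⟨0, 0, ?_⟩
    filter_upwards [hev] with s hs
    rw [max_eq_right hs.le]; ring
  · have hd : deriv f t = 0 := by
      by_contra hd
      exact hc2 ⟨h, hd, a, b, hab⟩
    obtain ⟨hda, hfa⟩ := locAff_deriv_self hab
    have ha0 : a = 0 := by rw [← hda, hd]
    have hb0 : b = 0 := by rw [ha0] at hfa; rw [hfa] at h; linarith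
    refine ⟨0, 0, ?_⟩
    filter_upwards [hab] with s hs
    rw [hs, ha0, hb0]; simp
  · have hev : ∀ᶠ s in 𝓝 t, 0 < f s := hf.cont.continuousAt (Ioi_mem_nhds h)
    refine ⟨a, b, ?_⟩
    filter_upwards [hev, hab] with s h1 h2
    rw [max_eq_left h1.le, h2]

/-- Away from bad points and genuine crossings, the sign pattern is locally constant. -/
lemma pattern_eventually_const {f : ℝ → ℝ} (hf : PL f) {t : ℝ}
    (h1 : t ∉ PLBad f) (h2 : t ∉ {t | f t = 0 ∧ deriv f t ≠ 0 ∧ LocAff f t}) :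
    ∀ᶠ s in 𝓝 t, (0 < f s ↔ 0 < f t) := by
  obtain ⟨a, b, hab⟩ := not_mem_PLBad h1
  rcases lt_trichotomy (f t) 0 with h | h | h
  · have hev : ∀ᶠ s in 𝓝 t, f s < 0 := hf.cont.continuousAt (Iio_mem_nhds h)
    filter_upwards [hev] with s hs
    exact iff_of_false (asymm hs) (asymm h)
  · have hd : deriv f t = 0 := by
      by_contra hd
      exact h2 ⟨h, hd, a, b, hab⟩
    obtain ⟨hda, hfa⟩ := locAff_deriv_self hab
    have ha0 : a = 0 := by rw [← hda, hd]
    have hb0 : b = 0 := by rw [ha0] at hfa; rw [hfa] at h; linarith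
    filter_upwards [hab] with s hs
    rw [hs, ha0, hb0, h]
    simp
  · have hev : ∀ᶠ s in 𝓝 t, 0 < f s := hf.cont.continuousAt (Ioi_mem_nhds h)
    filter_upwards [hev] with s hs
    exact iff_of_true hs h

/-- For a vector-valued function with PL coordinates, away from a finite set the
activation matrix is locally constant. -/
lemma actMat_eventually_const {ι : Type*} [Fintype ι] [DecidableEq ι] {z : ℝ → ι → ℝ}
    (hz : ∀ i, PL (fun t => z t i)) :
    ∃ T : Set ℝ, T.Finite ∧ ∀ t ∉ T, ∀ᶠ s in 𝓝 t, actMat (z s) = actMat (z t) := by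
  refine ⟨⋃ i, (PLBad (fun t => z t i) ∪
      {t | z t i = 0 ∧ deriv (fun t => z t i) t ≠ 0 ∧ LocAff (fun t => z t i) t}),
    Set.finite_iUnion (fun i => (hz i).bad.union (finite_crossings (hz i))), ?_⟩
  intro t ht
  have key : ∀ i, ∀ᶠ s in 𝓝 t, (0 < z s i ↔ 0 < z t i) := by
    intro i
    have hti : t ∉ PLBad (fun t => z t i) ∪
        {t | z t i = 0 ∧ deriv (fun t => z t i) t ≠ 0 ∧ LocAff (fun t => z t i) t} :=
      fun hmem => ht (mem_iUnion.2 ⟨i, hmem⟩)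
    simp only [mem_union, not_or] at hti
    exact pattern_eventually_const (hz i) hti.1 hti.2
  filter_upwards [eventually_all.2 key] with s hs
  exact congrArg Matrix.diagonal (funext fun i => if_congr (hs i) rfl rfl)

end Stmt16Aux
namespace Stmt16Aux

open Filter Set Topology Matrix

section Lip
variable {n : ℕ} {g : ℝ → Fin n → ℝ} {C : ℝ} {T : Set ℝ}

lemma lip_nobad (hg : Continuous g)
    (hgood : ∀ t ∉ T, ∃ w : Fin n → ℝ, euclNorm w ≤ C ∧ ∀ᶠ s in 𝓝 t, g s = g t + (s - t) • w)
    {a b : ℝ} (hab : a ≤ b) (hnb : ∀ t ∈ Ioo a b, t ∉ T) :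
    euclNorm (g b - g a) ≤ C * (b - a) := by
  rcases eq_or_lt_of_le hab with rfl | hlt
  · rw [sub_self, sub_self, enorm_zero, mul_zero]
  · have key : ∀ a' ∈ Ioo a b, euclNorm (g b - g a') ≤ C * (b - a') := by
      intro a' ha'
      have : b ∈ {t : ℝ | euclNorm (g t - g a') ≤ C * (t - a')} := by
        refine reach (S := {t : ℝ | euclNorm (g t - g a') ≤ C * (t - a')}) ha'.2.le ?_ ?_ ?_
        · show euclNorm (g a' - g a') ≤ C * (a' - a')
          rw [sub_self, sub_self, enorm_zero, mul_zero]
        · intro m _ hcl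
          have hSclosed : IsClosed {t : ℝ | euclNorm (g t - g a') ≤ C * (t - a')} :=
            isClosed_le (continuous_enorm_comp (hg.sub continuous_const))
              (by continuity)
          exact hSclosed.closure_subset ((closure_mono inter_subset_left) hcl)
        · intro m hm hmS
          have hmT : m ∉ T := hnb m ⟨lt_of_lt_of_le ha'.1 hm.1, hm.2⟩
          obtain ⟨w, hw, hev⟩ := hgood m hmT
          have hev' : ∀ᶠ x in 𝓝[>] m, g x = g m + (x - m) • w :=
            eventually_nhdsWithin_of_eventually_nhds hev
          filter_upwards [hev', self_mem_nhdsWithin] with x hx hx'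
          show euclNorm (g x - g a') ≤ C * (x - a')
          have hxm : (m : ℝ) < x := hx'
          have e1 : euclNorm (g x - g m) ≤ (x - m) * C := by
            have : g x - g m = (x - m) • w := by rw [hx]; abel
            rw [this, enorm_smul, abs_of_pos (by linarith : (0:ℝ) < x - m)]
            exact mul_le_mul_of_nonneg_left hw (by linarith)
          have e2 : euclNorm (g m - g a') ≤ C * (m - a') := hmS
          calc euclNorm (g x - g a') ≤ euclNorm (g x - g m) + euclNorm (g m - g a') :=
                enorm_sub_le _ _ _
          _ ≤ (x - m) * C + C * (m - a') := add_le_add e1 e2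
          _ = C * (x - a') := by ring
      exact this
    have h1 : Tendsto (fun a' => euclNorm (g b - g a')) (𝓝[>] a) (𝓝 (euclNorm (g b - g a))) :=
      ((continuous_enorm_comp (continuous_const.sub hg)).tendsto a).mono_left
        nhdsWithin_le_nhds
    have h2 : Tendsto (fun a' => C * (b - a')) (𝓝[>] a) (𝓝 (C * (b - a))) :=
      ((continuous_const.mul (continuous_const.sub continuous_id)).tendsto a).mono_left
        nhdsWithin_le_nhds
    refine le_of_tendsto_of_tendsto h1 h2 ?_
    filter_upwards [eventually_of_mem (Ioo_mem_nhdsGT_of_mem ⟨le_refl a, hlt⟩)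
      (fun x hx => hx)] with a' ha'
    exact key a' ha'

lemma lip_of_good (hg : Continuous g) (hT : T.Finite)
    (hgood : ∀ t ∉ T, ∃ w : Fin n → ℝ, euclNorm w ≤ C ∧ ∀ᶠ s in 𝓝 t, g s = g t + (s - t) • w) :
    ∀ a b : ℝ, a ≤ b → euclNorm (g b - g a) ≤ C * (b - a) := by
  suffices H : ∀ N : ℕ, ∀ a b : ℝ, a ≤ b → (T ∩ Ioo a b).ncard ≤ N →
      euclNorm (g b - g a) ≤ C * (b - a) by
    intro a b hab
    exact H (T ∩ Ioo a b).ncard a b hab le_rfl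
  intro N
  induction N with
  | zero =>
      intro a b hab h0
      have hfin : (T ∩ Ioo a b).Finite := hT.inter_of_left _
      have hempty : T ∩ Ioo a b = ∅ := (Set.ncard_eq_zero hfin).1 (Nat.le_zero.1 h0)
      refine lip_nobad hg hgood hab fun t ht htT => ?_
      have : t ∈ T ∩ Ioo a b := ⟨htT, ht⟩
      rw [hempty] at this
      exact this
  | succ N ih =>
      intro a b hab hcard
      by_cases hempty : T ∩ Ioo a b = ∅
      · refine lip_nobad hg hgood hab fun t ht htT => ?_
        have : t ∈ T ∩ Ioo a b := ⟨htT, ht⟩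
        rw [hempty] at this
        exact this
      · obtain ⟨c, hcT, hcI⟩ := nonempty_iff_ne_empty.2 hempty
        have hfin : (T ∩ Ioo a b).Finite := hT.inter_of_left _
        have hlt : ((T ∩ Ioo a b) \ {c}).ncard < (T ∩ Ioo a b).ncard :=
          Set.ncard_diff_singleton_lt_of_mem ⟨hcT, hcI⟩ hfin
        have hsub1 : T ∩ Ioo a c ⊆ (T ∩ Ioo a b) \ {c} := by
          rintro t ⟨ht1, ht2⟩
          exact ⟨⟨ht1, ht2.1, ht2.2.trans hcI.2⟩, fun hc => absurd (hc ▸ ht2.2) (lt_irrefl c)⟩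
        have hsub2 : T ∩ Ioo c b ⊆ (T ∩ Ioo a b) \ {c} := by
          rintro t ⟨ht1, ht2⟩
          exact ⟨⟨ht1, hcI.1.trans ht2.1, ht2.2⟩,
            fun hc => absurd (hc ▸ ht2.1) (lt_irrefl c)⟩
        have hN1 : (T ∩ Ioo a c).ncard ≤ N := by
          have := (Set.ncard_le_ncard hsub1 hfin.diff).trans_lt hlt
          omega
        have hN2 : (T ∩ Ioo c b).ncard ≤ N := by
          have := (Set.ncard_le_ncard hsub2 hfin.diff).trans_lt hlt
          omega
        have i1 := ih a c hcI.1.le hN1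
        have i2 := ih c b hcI.2.le hN2
        calc euclNorm (g b - g a) ≤ euclNorm (g b - g c) + euclNorm (g c - g a) :=
              enorm_sub_le _ _ _
        _ ≤ C * (b - c) + C * (c - a) := add_le_add i2 i1
        _ = C * (b - a) := by ring

end Lip

end Stmt16Aux
namespace Stmt16Aux

open Filter Set Topology Matrix

lemma relu_eq {ι : Type*} [Fintype ι] [DecidableEq ι] (z : ι → ℝ) :
    relu z = (actMat z).mulVec z := by
  funext i
  by_cases h : 0 < z i
  · simp [relu, actMat, Matrix.mulVec_diagonal, h, max_eq_left h.le]
  · simp [relu, actMat, Matrix.mulVec_diagonal, h, max_eq_right (not_lt.1 h)]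

lemma actMat_transpose {ι : Type*} [Fintype ι] [DecidableEq ι] (z : ι → ℝ) :
    (actMat z)ᵀ = actMat z := by
  unfold actMat; exact Matrix.diagonal_transpose _

lemma sum_mulVec {ι ι' ιx : Type*} [Fintype ι'] (t : Finset ιx) (M : ιx → Matrix ι ι' ℝ)
    (x : ι' → ℝ) : (∑ l ∈ t, M l).mulVec x = ∑ l ∈ t, (M l).mulVec x := by
  classical
  induction t using Finset.induction_on with
  | empty => simp
  | insert _ _ hnm ih => simp [Finset.sum_insert hnm, Matrix.add_mulVec, ih]

section Net
variable (κ : ℕ) (d s : ℕ → ℕ)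
    (E D : (l : ℕ) → Matrix (Fin (d l)) (Fin (d (l + 1))) ℝ)
    (S St : (l : ℕ) → Matrix (Fin (d l)) (Fin (s (l + 1))) ℝ)

lemma decS_eq (x : Fin (d 0) → ℝ) (j : ℕ) :
    decS κ d s E D S St x j = if _ : j < κ then
      relu ((D j).mulVec (decS κ d s E D S St x (j + 1)) + (St j).mulVec (chiF d s E S x j))
    else enc d E x j := by
  rw [decS]

lemma decS_top (x : Fin (d 0) → ℝ) : decS κ d s E D S St x κ = enc d E x κ := by
  rw [decS_eq, dif_neg (lt_irrefl κ)]

lemma decS_lt (x : Fin (d 0) → ℝ) {j : ℕ} (hj : j < κ) :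
    decS κ d s E D S St x j =
      relu ((D j).mulVec (decS κ d s E D S St x (j + 1)) + (St j).mulVec (chiF d s E S x j)) := by
  rw [decS_eq, dif_pos hj]

lemma enc_eq (x : Fin (d 0) → ℝ) (l : ℕ) : enc d E x l = (UpsE d E x l)ᵀ.mulVec x := by
  induction l with
  | zero =>
      show x = (1 : Matrix (Fin (d 0)) (Fin (d 0)) ℝ)ᵀ.mulVec x
      rw [Matrix.transpose_one, Matrix.one_mulVec]
  | succ l ih =>
      show relu ((E l)ᵀ.mulVec (enc d E x l)) = _
      rw [relu_eq, ih]
      show _ = (UpsE d E x l * E l * actMat ((E l)ᵀ.mulVec (enc d E x l)))ᵀ.mulVec x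
      rw [ih]
      simp only [Matrix.mulVec_mulVec, Matrix.transpose_mul, actMat_transpose, Matrix.mul_assoc]

lemma chiF_eq (x : Fin (d 0) → ℝ) (l : ℕ) :
    chiF d s E S x l = (UpsE d E x l * Mskip d s E S x l)ᵀ.mulVec x := by
  show relu ((S l)ᵀ.mulVec (enc d E x l)) = _
  rw [relu_eq, enc_eq]
  show _ = (UpsE d E x l * (S l * actMat ((S l)ᵀ.mulVec (enc d E x l))))ᵀ.mulVec x
  rw [enc_eq]
  simp only [Matrix.mulVec_mulVec, Matrix.transpose_mul, actMat_transpose, Matrix.mul_assoc]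

lemma dec_eq (x : Fin (d 0) → ℝ) : ∀ j, j ≤ κ →
    decS κ d s E D S St x 0 = (UpsDS κ d s E D S St x j).mulVec (decS κ d s E D S St x j)
      + ∑ l ∈ Finset.range j,
          (UpsDS κ d s E D S St x l * MskipT κ d s E D S St x l).mulVec (chiF d s E S x l) := by
  intro j
  induction j with
  | zero =>
      intro _
      show decS κ d s E D S St x 0 =
        (1 : Matrix (Fin (d 0)) (Fin (d 0)) ℝ).mulVec (decS κ d s E D S St x 0) + _
      rw [Matrix.one_mulVec]
      simp
  | succ j ih =>
      intro hj
      have hjκ : j < κ := hj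
      rw [ih hjκ.le]
      have key : (UpsDS κ d s E D S St x j).mulVec (decS κ d s E D S St x j)
          = (UpsDS κ d s E D S St x (j + 1)).mulVec (decS κ d s E D S St x (j + 1))
            + (UpsDS κ d s E D S St x j * MskipT κ d s E D S St x j).mulVec
                (chiF d s E S x j) := by
        conv_lhs => rw [decS_lt κ d s E D S St x hjκ, relu_eq]
        rw [Matrix.mulVec_mulVec, Matrix.mulVec_add, Matrix.mulVec_mulVec,
          Matrix.mulVec_mulVec]
        have h2 : UpsDS κ d s E D S St x j *
            actMat ((D j).mulVec (decS κ d s E D S St x (j + 1)) +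
              (St j).mulVec (chiF d s E S x j)) * St j
            = UpsDS κ d s E D S St x j * MskipT κ d s E D S St x j := by
          rw [Matrix.mul_assoc]; rfl
        rw [h2]
        rfl
      rw [key, Finset.sum_range_succ]
      abel

lemma BB_eq (x : Fin (d 0) → ℝ) :
    BskipT κ d s E D S St x * (Bskip κ d s E S x)ᵀ
      = UpsDS κ d s E D S St x κ * (UpsE d E x κ)ᵀ
        + ∑ l ∈ Finset.range κ,
            (UpsDS κ d s E D S St x l * MskipT κ d s E D S St x l) *
              (UpsE d E x l * Mskip d s E S x l)ᵀ := by
  ext i j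
  rw [Matrix.mul_apply, Fintype.sum_sum_type]
  rw [Matrix.add_apply]
  congr 1
  rw [← Finset.univ_sigma_univ, Finset.sum_sigma]
  rw [Matrix.sum_apply]
  rw [Finset.sum_range fun l => ((UpsDS κ d s E D S St x l * MskipT κ d s E D S St x l) *
    (UpsE d E x l * Mskip d s E S x l)ᵀ) i j]
  refine Finset.sum_congr rfl fun l _ => ?_
  rw [Matrix.mul_apply]
  refine Finset.sum_congr rfl fun a _ => ?_
  rfl

lemma F_eq (x : Fin (d 0) → ℝ) :
    decS κ d s E D S St x 0 = (BskipT κ d s E D S St x * (Bskip κ d s E S x)ᵀ).mulVec x := by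
  have h0 := dec_eq κ d s E D S St x κ le_rfl
  rw [decS_top, enc_eq] at h0
  rw [BB_eq, Matrix.add_mulVec, sum_mulVec, h0]
  congr 1
  · rw [Matrix.mulVec_mulVec]
  · refine Finset.sum_congr rfl fun l _ => ?_
    rw [chiF_eq, Matrix.mulVec_mulVec]

lemma continuous_relu {ι : Type*} [Fintype ι] : Continuous (fun w : ι → ℝ => relu w) :=
  continuous_pi fun i => (continuous_apply i).max continuous_const

lemma continuous_enc (l : ℕ) : Continuous fun x => enc d E x l := by
  induction l with
  | zero => exact continuous_id
  | succ l ih => exact continuous_relu.comp (Continuous.matrix_mulVec continuous_const ih)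

lemma continuous_chiF (l : ℕ) : Continuous fun x => chiF d s E S x l :=
  continuous_relu.comp (Continuous.matrix_mulVec continuous_const (continuous_enc d E l))

lemma continuous_decS (j : ℕ) : Continuous fun x => decS κ d s E D S St x j := by
  suffices H : ∀ n j, κ ≤ j + n → Continuous fun x => decS κ d s E D S St x j from
    H κ j (by omega)
  intro n
  induction n with
  | zero =>
      intro j hj
      have hnot : ¬ j < κ := by omega
      have heq : (fun x => decS κ d s E D S St x j) = fun x => enc d E x j :=
        funext fun x => by rw [decS_eq, dif_neg hnot]
      rw [heq]
      exact continuous_enc d E j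
  | succ n ih =>
      intro j hj
      by_cases h : j < κ
      · have heq : (fun x => decS κ d s E D S St x j) = fun x =>
            relu ((D j).mulVec (decS κ d s E D S St x (j + 1)) +
              (St j).mulVec (chiF d s E S x j)) :=
          funext fun x => by rw [decS_lt κ d s E D S St x h]
        rw [heq]
        exact continuous_relu.comp
          ((Continuous.matrix_mulVec continuous_const (ih (j + 1) (by omega))).add
            (Continuous.matrix_mulVec continuous_const (continuous_chiF d s E S j)))
      · have heq : (fun x => decS κ d s E D S St x j) = fun x => enc d E x j :=
          funext fun x => by rw [decS_eq, dif_neg h]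
        rw [heq]
        exact continuous_enc d E j

lemma finiteRange_UpsE (l : ℕ) : (range fun x => UpsE d E x l).Finite := by
  induction l with
  | zero => exact finiteRange_const 1
  | succ l ih =>
      exact finiteRange_comp2 (fun A B => A * E l * B) ih
        (finiteRange_actMat fun x => (E l)ᵀ.mulVec (enc d E x l))

lemma finiteRange_UpsDS (l : ℕ) : (range fun x => UpsDS κ d s E D S St x l).Finite := by
  induction l with
  | zero => exact finiteRange_const 1
  | succ l ih =>
      exact finiteRange_comp2 (fun A B => A * B * D l) ih
        (finiteRange_actMat fun x => (D l).mulVec (decS κ d s E D S St x (l + 1)) +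
          (St l).mulVec (chiF d s E S x l))

lemma finiteRange_Mskip (l : ℕ) : (range fun x => Mskip d s E S x l).Finite :=
  finiteRange_comp1 (fun B => S l * B)
    (finiteRange_actMat fun x => (S l)ᵀ.mulVec (enc d E x l))

lemma finiteRange_MskipT (l : ℕ) : (range fun x => MskipT κ d s E D S St x l).Finite :=
  finiteRange_comp1 (fun B => B * St l)
    (finiteRange_actMat fun x => (D l).mulVec (decS κ d s E D S St x (l + 1)) +
      (St l).mulVec (chiF d s E S x l))

lemma finiteRange_Bskip : (range fun x => Bskip κ d s E S x).Finite := by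
  exact finiteRange_comp2
    (fun (A : Matrix (Fin (d 0)) (Fin (d κ)) ℝ)
        (G : (l : Fin κ) → Matrix (Fin (d 0)) (Fin (s (l + 1))) ℝ) =>
      (fun i c => match c with
        | Sum.inl j => A i j
        | Sum.inr ⟨l, j⟩ => G l i j : Matrix (Fin (d 0)) (SkipIdx κ d s) ℝ))
    (finiteRange_UpsE d E κ)
    (finiteRange_pi _ fun l : Fin κ =>
      finiteRange_comp2 (· * ·) (finiteRange_UpsE d E l) (finiteRange_Mskip d s E S l))

lemma finiteRange_BskipT : (range fun x => BskipT κ d s E D S St x).Finite := by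
  exact finiteRange_comp2
    (fun (A : Matrix (Fin (d 0)) (Fin (d κ)) ℝ)
        (G : (l : Fin κ) → Matrix (Fin (d 0)) (Fin (s (l + 1))) ℝ) =>
      (fun i c => match c with
        | Sum.inl j => A i j
        | Sum.inr ⟨l, j⟩ => G l i j : Matrix (Fin (d 0)) (SkipIdx κ d s) ℝ))
    (finiteRange_UpsDS κ d s E D S St κ)
    (finiteRange_pi _ fun l : Fin κ =>
      finiteRange_comp2 (· * ·) (finiteRange_UpsDS κ d s E D S St l)
        (finiteRange_MskipT κ d s E D S St l))

end Net

end Stmt16Aux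
namespace Stmt16Aux

open Filter Set Topology Matrix

section NetPL
variable (κ : ℕ) (d s : ℕ → ℕ)
    (E D : (l : ℕ) → Matrix (Fin (d l)) (Fin (d (l + 1))) ℝ)
    (S St : (l : ℕ) → Matrix (Fin (d l)) (Fin (s (l + 1))) ℝ)
    (x₀ v : Fin (d 0) → ℝ)

lemma pl_enc (l : ℕ) : ∀ i, PL fun t : ℝ => enc d E (x₀ + t • v) l i := by
  induction l with
  | zero =>
      intro i
      have heq : (fun t : ℝ => enc d E (x₀ + t • v) 0 i) = fun t => v i * t + x₀ i := by
        funext t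
        show x₀ i + t * v i = v i * t + x₀ i
        ring
      rw [heq]
      exact PL.affine _ _
  | succ l ih =>
      intro i
      have hpre : PL fun t : ℝ => (E l)ᵀ.mulVec (enc d E (x₀ + t • v) l) i := by
        have heq : (fun t : ℝ => (E l)ᵀ.mulVec (enc d E (x₀ + t • v) l) i)
            = fun t => ∑ j, (E l)ᵀ i j * enc d E (x₀ + t • v) l j := by
          funext t; rfl
        rw [heq]
        exact PL.sum _ _ fun j => PL.const_mul _ (ih j)
      exact hpre.relu

lemma pl_chiF (l : ℕ) : ∀ i, PL fun t : ℝ => chiF d s E S (x₀ + t • v) l i := by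
  intro i
  have hpre : PL fun t : ℝ => (S l)ᵀ.mulVec (enc d E (x₀ + t • v) l) i := by
    have heq : (fun t : ℝ => (S l)ᵀ.mulVec (enc d E (x₀ + t • v) l) i)
        = fun t => ∑ j, (S l)ᵀ i j * enc d E (x₀ + t • v) l j := by
      funext t; rfl
    rw [heq]
    exact PL.sum _ _ fun j => PL.const_mul _ (pl_enc d E x₀ v l j)
  exact hpre.relu

lemma pl_decS (j : ℕ) : ∀ i, PL fun t : ℝ => decS κ d s E D S St (x₀ + t • v) j i := by
  suffices H : ∀ n j, κ ≤ j + n → ∀ i, PL fun t : ℝ => decS κ d s E D S St (x₀ + t • v) j i from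
    H κ j (by omega)
  intro n
  induction n with
  | zero =>
      intro j hj i
      have hnot : ¬ j < κ := by omega
      have heq : (fun t : ℝ => decS κ d s E D S St (x₀ + t • v) j i)
          = fun t => enc d E (x₀ + t • v) j i := by
        funext t; rw [decS_eq, dif_neg hnot]
      rw [heq]
      exact pl_enc d E x₀ v j i
  | succ n ih =>
      intro j hj i
      by_cases h : j < κ
      · have hpre : PL fun t : ℝ => ((D j).mulVec (decS κ d s E D S St (x₀ + t • v) (j + 1)) +
            (St j).mulVec (chiF d s E S (x₀ + t • v) j)) i := by
          have heq : (fun t : ℝ => ((D j).mulVec (decS κ d s E D S St (x₀ + t • v) (j + 1)) +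
              (St j).mulVec (chiF d s E S (x₀ + t • v) j)) i)
              = fun t => (∑ k, D j i k * decS κ d s E D S St (x₀ + t • v) (j + 1) k) +
                  ∑ k, St j i k * chiF d s E S (x₀ + t • v) j k := by
            funext t; rfl
          rw [heq]
          exact (PL.sum _ _ fun k => PL.const_mul _ (ih (j + 1) (by omega) k)).add
            (PL.sum _ _ fun k => PL.const_mul _ (pl_chiF d s E S x₀ v j k))
        have heq : (fun t : ℝ => decS κ d s E D S St (x₀ + t • v) j i)
            = fun t => max (((D j).mulVec (decS κ d s E D S St (x₀ + t • v) (j + 1)) +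
                (St j).mulVec (chiF d s E S (x₀ + t • v) j)) i) 0 := by
          funext t; rw [decS_eq, dif_pos h]; rfl
        rw [heq]
        exact hpre.relu
      · have heq : (fun t : ℝ => decS κ d s E D S St (x₀ + t • v) j i)
            = fun t => enc d E (x₀ + t • v) j i := by
          funext t; rw [decS_eq, dif_neg h]
        rw [heq]
        exact pl_enc d E x₀ v j i

/-- Away from a finite set of parameters, the matrix `B̃(γ(t))B(γ(t))ᵀ` is locally
constant along the line `γ(t) = x₀ + t v`. -/
lemma network_good : ∃ T : Set ℝ, T.Finite ∧ ∀ t ∉ T, ∀ᶠ u in 𝓝 t,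
    BskipT κ d s E D S St (x₀ + u • v) * (Bskip κ d s E S (x₀ + u • v))ᵀ
      = BskipT κ d s E D S St (x₀ + t • v) * (Bskip κ d s E S (x₀ + t • v))ᵀ := by
  have hE := fun l : Fin κ => actMat_eventually_const
    (z := fun u : ℝ => (E l)ᵀ.mulVec (enc d E (x₀ + u • v) l))
    (fun i => by
      have heq : (fun t : ℝ => (E (l : ℕ))ᵀ.mulVec (enc d E (x₀ + t • v) l) i)
          = fun t => ∑ j, (E (l : ℕ))ᵀ i j * enc d E (x₀ + t • v) l j := by funext t; rfl
      rw [heq]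
      exact PL.sum _ _ fun j => PL.const_mul _ (pl_enc d E x₀ v l j))
  have hS := fun l : Fin κ => actMat_eventually_const
    (z := fun u : ℝ => (S l)ᵀ.mulVec (enc d E (x₀ + u • v) l))
    (fun i => by
      have heq : (fun t : ℝ => (S (l : ℕ))ᵀ.mulVec (enc d E (x₀ + t • v) l) i)
          = fun t => ∑ j, (S (l : ℕ))ᵀ i j * enc d E (x₀ + t • v) l j := by funext t; rfl
      rw [heq]
      exact PL.sum _ _ fun j => PL.const_mul _ (pl_enc d E x₀ v l j))
  have hD := fun l : Fin κ => actMat_eventually_const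
    (z := fun u : ℝ => (D l).mulVec (decS κ d s E D S St (x₀ + u • v) (l + 1)) +
      (St l).mulVec (chiF d s E S (x₀ + u • v) l))
    (fun i => by
      have heq : (fun t : ℝ => ((D (l : ℕ)).mulVec (decS κ d s E D S St (x₀ + t • v) (l + 1)) +
          (St (l : ℕ)).mulVec (chiF d s E S (x₀ + t • v) l)) i)
          = fun t => (∑ k, D (l : ℕ) i k * decS κ d s E D S St (x₀ + t • v) ((l : ℕ) + 1) k) +
              ∑ k, St (l : ℕ) i k * chiF d s E S (x₀ + t • v) l k := by funext t; rfl
      rw [heq]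
      exact (PL.sum _ _ fun k => PL.const_mul _ (pl_decS κ d s E D S St x₀ v ((l : ℕ) + 1) k)).add
        (PL.sum _ _ fun k => PL.const_mul _ (pl_chiF d s E S x₀ v l k)))
  choose TE hTEfin hTE using hE
  choose TS hTSfin hTS using hS
  choose TD hTDfin hTD using hD
  refine ⟨(⋃ l, TE l) ∪ (⋃ l, TS l) ∪ (⋃ l, TD l),
    ((Set.finite_iUnion hTEfin).union (Set.finite_iUnion hTSfin)).union
      (Set.finite_iUnion hTDfin), ?_⟩
  intro t ht
  simp only [mem_union, mem_iUnion, not_or, not_exists] at ht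
  obtain ⟨⟨htE, htS⟩, htD⟩ := ht
  have hEall : ∀ᶠ u in 𝓝 t, ∀ l : Fin κ,
      actMat ((E (l : ℕ))ᵀ.mulVec (enc d E (x₀ + u • v) l)) =
      actMat ((E (l : ℕ))ᵀ.mulVec (enc d E (x₀ + t • v) l)) :=
    eventually_all.2 fun l => hTE l t (htE l)
  have hSall : ∀ᶠ u in 𝓝 t, ∀ l : Fin κ,
      actMat ((S (l : ℕ))ᵀ.mulVec (enc d E (x₀ + u • v) l)) =
      actMat ((S (l : ℕ))ᵀ.mulVec (enc d E (x₀ + t • v) l)) :=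
    eventually_all.2 fun l => hTS l t (htS l)
  have hDall : ∀ᶠ u in 𝓝 t, ∀ l : Fin κ,
      actMat ((D (l : ℕ)).mulVec (decS κ d s E D S St (x₀ + u • v) ((l : ℕ) + 1)) +
        (St (l : ℕ)).mulVec (chiF d s E S (x₀ + u • v) l)) =
      actMat ((D (l : ℕ)).mulVec (decS κ d s E D S St (x₀ + t • v) ((l : ℕ) + 1)) +
        (St (l : ℕ)).mulVec (chiF d s E S (x₀ + t • v) l)) :=
    eventually_all.2 fun l => hTD l t (htD l)
  filter_upwards [hEall, hSall, hDall] with u HE HS HD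
  have HE' : ∀ l, l < κ →
      actMat ((E l)ᵀ.mulVec (enc d E (x₀ + u • v) l)) =
      actMat ((E l)ᵀ.mulVec (enc d E (x₀ + t • v) l)) := fun l hl => HE ⟨l, hl⟩
  have HS' : ∀ l, l < κ →
      actMat ((S l)ᵀ.mulVec (enc d E (x₀ + u • v) l)) =
      actMat ((S l)ᵀ.mulVec (enc d E (x₀ + t • v) l)) := fun l hl => HS ⟨l, hl⟩
  have HD' : ∀ l, l < κ →
      actMat ((D l).mulVec (decS κ d s E D S St (x₀ + u • v) (l + 1)) +
        (St l).mulVec (chiF d s E S (x₀ + u • v) l)) =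
      actMat ((D l).mulVec (decS κ d s E D S St (x₀ + t • v) (l + 1)) +
        (St l).mulVec (chiF d s E S (x₀ + t • v) l)) := fun l hl => HD ⟨l, hl⟩
  have hUE : ∀ l, l ≤ κ → UpsE d E (x₀ + u • v) l = UpsE d E (x₀ + t • v) l := by
    intro l
    induction l with
    | zero => intro _; rfl
    | succ l ih =>
        intro hl
        show UpsE d E (x₀ + u • v) l * E l * actMat ((E l)ᵀ.mulVec (enc d E (x₀ + u • v) l)) = _
        rw [ih (by omega), HE' l (by omega)]
        rfl
  have hUDS : ∀ l, l ≤ κ →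
      UpsDS κ d s E D S St (x₀ + u • v) l = UpsDS κ d s E D S St (x₀ + t • v) l := by
    intro l
    induction l with
    | zero => intro _; rfl
    | succ l ih =>
        intro hl
        show UpsDS κ d s E D S St (x₀ + u • v) l *
          actMat ((D l).mulVec (decS κ d s E D S St (x₀ + u • v) (l + 1)) +
            (St l).mulVec (chiF d s E S (x₀ + u • v) l)) * D l = _
        rw [ih (by omega), HD' l (by omega)]
        rfl
  have hM : ∀ l, l < κ → Mskip d s E S (x₀ + u • v) l = Mskip d s E S (x₀ + t • v) l := by
    intro l hl
    show S l * actMat ((S l)ᵀ.mulVec (enc d E (x₀ + u • v) l)) = _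
    rw [HS' l hl]
    rfl
  have hMT : ∀ l, l < κ →
      MskipT κ d s E D S St (x₀ + u • v) l = MskipT κ d s E D S St (x₀ + t • v) l := by
    intro l hl
    show actMat ((D l).mulVec (decS κ d s E D S St (x₀ + u • v) (l + 1)) +
      (St l).mulVec (chiF d s E S (x₀ + u • v) l)) * St l = _
    rw [HD' l hl]
    rfl
  have hB : Bskip κ d s E S (x₀ + u • v) = Bskip κ d s E S (x₀ + t • v) := by
    funext i c
    rcases c with j | ⟨l, j⟩
    · show UpsE d E (x₀ + u • v) κ i j = UpsE d E (x₀ + t • v) κ i j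
      rw [hUE κ le_rfl]
    · show (UpsE d E (x₀ + u • v) l * Mskip d s E S (x₀ + u • v) l) i j = _
      rw [hUE l l.isLt.le, hM l l.isLt]
      rfl
  have hBT : BskipT κ d s E D S St (x₀ + u • v) = BskipT κ d s E D S St (x₀ + t • v) := by
    funext i c
    rcases c with j | ⟨l, j⟩
    · show UpsDS κ d s E D S St (x₀ + u • v) κ i j = UpsDS κ d s E D S St (x₀ + t • v) κ i j
      rw [hUDS κ le_rfl]
    · show (UpsDS κ d s E D S St (x₀ + u • v) l * MskipT κ d s E D S St (x₀ + u • v) l) i j = _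
      rw [hUDS l l.isLt.le, hMT l l.isLt]
      rfl
  rw [hB, hBT]

end NetPL

end Stmt16Aux

open Stmt16Aux Filter Set Topology Matrix in
/-- The κ-layer ReLU encoder-decoder network `F` with skipped
connections is globally Lipschitz with Lipschitz constant
`K = sup_x ‖B̃^{skp}(x)B^{skp}(x)ᵀ‖₂` (a supremum of the finitely many realized
matrices): `‖F(x₁) − F(x₂)‖₂ ≤ K ‖x₁ − x₂‖₂` for all `x₁, x₂`. -/
theorem stmt_16 (κ : ℕ) (d s : ℕ → ℕ)
    (E D : (l : ℕ) → Matrix (Fin (d l)) (Fin (d (l + 1))) ℝ)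
    (S St : (l : ℕ) → Matrix (Fin (d l)) (Fin (s (l + 1))) ℝ) :
    (Set.range fun x : Fin (d 0) → ℝ =>
      BskipT κ d s E D S St x * (Bskip κ d s E S x)ᵀ).Finite ∧
    ∀ x₁ x₂ : Fin (d 0) → ℝ,
      euclNorm (decS κ d s E D S St x₁ 0 - decS κ d s E D S St x₂ 0) ≤
        (⨆ x : Fin (d 0) → ℝ,
          specNorm (BskipT κ d s E D S St x * (Bskip κ d s E S x)ᵀ)) *
          euclNorm (x₁ - x₂) := by
  have hMfin : (Set.range fun x : Fin (d 0) → ℝ =>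
      BskipT κ d s E D S St x * (Bskip κ d s E S x)ᵀ).Finite :=
    finiteRange_comp2 (fun A B => A * Bᵀ) (finiteRange_BskipT κ d s E D S St)
      (finiteRange_Bskip κ d s E S)
  refine ⟨hMfin, ?_⟩
  intro x₁ x₂
  set K := ⨆ x : Fin (d 0) → ℝ,
    specNorm (BskipT κ d s E D S St x * (Bskip κ d s E S x)ᵀ) with hK
  have hKbdd : BddAbove (Set.range fun x : Fin (d 0) → ℝ =>
      specNorm (BskipT κ d s E D S St x * (Bskip κ d s E S x)ᵀ)) :=
    (finiteRange_comp1 specNorm hMfin).bddAbove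
  obtain ⟨T, hTfin, hTg⟩ := network_good κ d s E D S St x₂ (x₁ - x₂)
  set g := fun t : ℝ => decS κ d s E D S St (x₂ + t • (x₁ - x₂)) 0 with hgdef
  have hgc : Continuous g :=
    (continuous_decS κ d s E D S St 0).comp
      (continuous_const.add (continuous_id.smul continuous_const))
  have hgood : ∀ t ∉ T, ∃ w : Fin (d 0) → ℝ, euclNorm w ≤ K * euclNorm (x₁ - x₂) ∧
      ∀ᶠ u in 𝓝 t, g u = g t + (u - t) • w := by
    intro t ht
    refine ⟨(BskipT κ d s E D S St (x₂ + t • (x₁ - x₂)) *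
      (Bskip κ d s E S (x₂ + t • (x₁ - x₂)))ᵀ).mulVec (x₁ - x₂), ?_, ?_⟩
    · calc euclNorm ((BskipT κ d s E D S St (x₂ + t • (x₁ - x₂)) *
            (Bskip κ d s E S (x₂ + t • (x₁ - x₂)))ᵀ).mulVec (x₁ - x₂))
          ≤ specNorm (BskipT κ d s E D S St (x₂ + t • (x₁ - x₂)) *
              (Bskip κ d s E S (x₂ + t • (x₁ - x₂)))ᵀ) * euclNorm (x₁ - x₂) :=
            enorm_mulVec_le_specNorm _ _
      _ ≤ K * euclNorm (x₁ - x₂) :=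
            mul_le_mul_of_nonneg_right (le_ciSup hKbdd _) (enorm_nonneg _)
    · filter_upwards [hTg t ht] with u hu
      show decS κ d s E D S St (x₂ + u • (x₁ - x₂)) 0 =
        decS κ d s E D S St (x₂ + t • (x₁ - x₂)) 0 + (u - t) •
          (BskipT κ d s E D S St (x₂ + t • (x₁ - x₂)) *
            (Bskip κ d s E S (x₂ + t • (x₁ - x₂)))ᵀ).mulVec (x₁ - x₂)
      rw [F_eq, F_eq, hu]
      have hγ : x₂ + u • (x₁ - x₂) = (x₂ + t • (x₁ - x₂)) + (u - t) • (x₁ - x₂) := by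
        rw [sub_smul]; abel
      rw [hγ, Matrix.mulVec_add, Matrix.mulVec_smul]
  have final := lip_of_good hgc hTfin hgood 0 1 zero_le_one
  have hg1 : g 1 = decS κ d s E D S St x₁ 0 := by
    show decS κ d s E D S St (x₂ + (1 : ℝ) • (x₁ - x₂)) 0 = _
    have h : x₂ + (1 : ℝ) • (x₁ - x₂) = x₁ := by rw [one_smul]; abel
    rw [h]
  have hg0 : g 0 = decS κ d s E D S St x₂ 0 := by
    show decS κ d s E D S St (x₂ + (0 : ℝ) • (x₁ - x₂)) 0 = _
    have h : x₂ + (0 : ℝ) • (x₁ - x₂) = x₂ := by rw [zero_smul]; abel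
    rw [h]
  rw [← hg1, ← hg0]
  calc euclNorm (g 1 - g 0) ≤ K * euclNorm (x₁ - x₂) * (1 - 0) := final
  _ = K * euclNorm (x₁ - x₂) := by ring
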